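/- arXiv:0903.1373 — 3 statements merged into one kernel-verified Lean document; each statement's English description precedes it below -/
import Mathlib

section
/- Let 0 ≤ k ≤ n and let J : Fin k → Fin n be strictly monotone, with Jᶜ : Fin (n-k) → Fin n the unique strictly monotone map whose range is the complement of the range of J. Then the permutation ⟨Jᶜ,⃖J⟩ of Fin n (listing the values of Jᶜ in order followed by the values of J in reverse order) has sign (-1)^{n·k + ∑_{t} ((J t : ℕ) + 1)}. -/
/-- The permutation of `Fin n` that lists the values of `α : Fin a → Fin n` in order,
followed by the values of `β : Fin b → Fin n` in reverse order. -/
noncomputable def listPerm {n a b : ℕ} (hab : a + b = n) (α : Fin a → Fin n) (β : Fin b → Fin n)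
    (hα : Function.Injective α) (hβ : Function.Injective β)
    (hd : ∀ s t, α s ≠ β t) : Equiv.Perm (Fin n) :=
  Equiv.ofBijective
    ((Sum.elim α (β ∘ Fin.rev)) ∘ (finSumFinEquiv.symm ∘ Fin.cast hab.symm))
    (by
      have hinj : Function.Injective (Sum.elim α (β ∘ Fin.rev)) :=
        Function.Injective.sumElim hα (hβ.comp Fin.rev_injective)
          (fun s t => hd s (Fin.rev t))
      exact Finite.injective_iff_bijective.mp
        (hinj.comp (finSumFinEquiv.symm.injective.comp (Fin.cast_injective _))))

/-- The unique strictly monotone map `Fin (n-k) → Fin n` whose range is the complement of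
the range of an injective map `J : Fin k → Fin n`. -/
noncomputable def monoCompl {n k : ℕ} (J : Fin k → Fin n) (hJ : Function.Injective J) :
    Fin (n - k) → Fin n :=
  (Finset.univ.image J)ᶜ.orderEmbOfFin (by
    rw [Finset.card_compl, Finset.card_image_of_injective _ hJ, Finset.card_univ,
      Fintype.card_fin, Fintype.card_fin])

theorem monoCompl_injective {n k : ℕ} (J : Fin k → Fin n) (hJ : Function.Injective J) :
    Function.Injective (monoCompl J hJ) :=
  ((Finset.univ.image J)ᶜ.orderEmbOfFin _).injective

theorem monoCompl_ne {n k : ℕ} (J : Fin k → Fin n) (hJ : Function.Injective J) :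
    ∀ s t, monoCompl J hJ s ≠ J t := by
  intro s t h
  have hmem : monoCompl J hJ s ∈ (Finset.univ.image J)ᶜ := Finset.orderEmbOfFin_mem _ _ _
  rw [Finset.mem_compl] at hmem
  exact hmem (h ▸ Finset.mem_image_of_mem J (Finset.mem_univ t))

theorem monoCompl_ne' {n k : ℕ} (J : Fin k → Fin n) (hJ : Function.Injective J) :
    ∀ s t, monoCompl J hJ s ≠ J t := monoCompl_ne J hJ

theorem listPerm_apply_lt {n a b : ℕ} (hab : a + b = n) (α : Fin a → Fin n) (β : Fin b → Fin n)
    (hα : Function.Injective α) (hβ : Function.Injective β) (hd : ∀ s t, α s ≠ β t)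
    (i : Fin n) (h : (i : ℕ) < a) :
    listPerm hab α β hα hβ hd i = α ⟨i, h⟩ := by
  show Sum.elim α (β ∘ Fin.rev) (finSumFinEquiv.symm (Fin.cast hab.symm i)) = _
  have : Fin.cast hab.symm i = Fin.castAdd b ⟨i, h⟩ := rfl
  rw [this, finSumFinEquiv_symm_apply_castAdd]; rfl

theorem listPerm_apply_ge {n a b : ℕ} (hab : a + b = n) (α : Fin a → Fin n) (β : Fin b → Fin n)
    (hα : Function.Injective α) (hβ : Function.Injective β) (hd : ∀ s t, α s ≠ β t)
    (i : Fin n) (h : a ≤ (i : ℕ)) :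
    listPerm hab α β hα hβ hd i =
      β (Fin.rev ⟨(i : ℕ) - a, by have := i.isLt; omega⟩) := by
  show Sum.elim α (β ∘ Fin.rev) (finSumFinEquiv.symm (Fin.cast hab.symm i)) = _
  have : Fin.cast hab.symm i = Fin.natAdd a ⟨(i : ℕ) - a, by have := i.isLt; omega⟩ := by
    ext; simp; omega
  rw [this, finSumFinEquiv_symm_apply_natAdd]
  rfl

theorem fin_strictMono_le {a : ℕ} {f : Fin a → ℕ} (hf : StrictMono f) (i : Fin a) :
    (i : ℕ) ≤ f i := by
  obtain ⟨m, hm⟩ := i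
  induction m with
  | zero => exact Nat.zero_le _
  | succ j ih =>
    have h1 := ih (by omega)
    have h2 : f ⟨j, by omega⟩ < f ⟨j + 1, hm⟩ := hf (by simp [Fin.lt_def])
    simpa using Nat.lt_of_le_of_lt h1 h2

theorem neg_one_pow_parity {M : Type*} [Monoid M] [HasDistribNeg M] (a b : ℕ)
    (h : a % 2 = b % 2) : (-1 : M) ^ a = (-1) ^ b := by
  rcases Nat.even_or_odd a with ha | ha
  · have hb : Even b := by rw [Nat.even_iff] at ha ⊢; omega
    rw [ha.neg_one_pow, hb.neg_one_pow]
  · have hb : Odd b := by rw [Nat.odd_iff] at ha ⊢; omega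
    rw [ha.neg_one_pow, hb.neg_one_pow]

theorem monoCompl_strictMono {n k : ℕ} (J : Fin k → Fin n) (hJ : Function.Injective J) :
    StrictMono (monoCompl J hJ) :=
  ((Finset.univ.image J)ᶜ.orderEmbOfFin _).strictMono

theorem le_monoCompl {n k : ℕ} (J : Fin k → Fin n) (hJ : Function.Injective J)
    (s : Fin (n - k)) : (s : ℕ) ≤ (monoCompl J hJ s : ℕ) :=
  fin_strictMono_le (fun _ _ h => (monoCompl_strictMono J hJ) h) s

/-- If all naturals `≤ s` avoid the range of `J`, then the `s`-th element of the
complement is `s` itself. -/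

theorem monoCompl_eq_self {n k : ℕ} (J : Fin k → Fin n) (hJ : Function.Injective J)
    (s : Fin (n - k)) (hs : ∀ m : ℕ, m ≤ (s : ℕ) → ∀ t, m ≠ (J t : ℕ)) :
    (monoCompl J hJ s : ℕ) = (s : ℕ) := by
  refine le_antisymm ?_ (le_monoCompl J hJ s)
  have hcard : ((Finset.univ.image J)ᶜ : Finset (Fin n)).card = n - k := by
    rw [Finset.card_compl, Finset.card_image_of_injective _ hJ, Finset.card_univ,
      Fintype.card_fin, Fintype.card_fin]
  set e := ((Finset.univ.image J)ᶜ).orderIsoOfFin hcard with he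
  have hsn : (s : ℕ) < n := by have := s.isLt; omega
  have hmem : ∀ m : ℕ, (hm : m ≤ (s : ℕ)) → (⟨m, by omega⟩ : Fin n) ∈ (Finset.univ.image J)ᶜ := by
    intro m hm
    rw [Finset.mem_compl, Finset.mem_image]
    rintro ⟨t, -, ht⟩
    exact hs m hm t (by rw [ht])
  set u : Fin (n - k) := e.symm ⟨⟨(s : ℕ), hsn⟩, hmem _ le_rfl⟩ with hu
  set g : Fin ((s : ℕ) + 1) → ℕ := fun m => ((e.symm ⟨⟨(m : ℕ), by have := m.isLt; omega⟩,
    hmem m (by have := m.isLt; omega)⟩ : Fin (n - k)) : ℕ) with hg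
  have hgmono : StrictMono g := by
    intro x y hxy
    refine e.symm.strictMono ?_
    exact Subtype.mk_lt_mk.mpr (Fin.mk_lt_mk.mpr hxy)
  have hgs : (s : ℕ) ≤ (u : ℕ) :=
    fin_strictMono_le hgmono ⟨(s : ℕ), by omega⟩
  have key : (monoCompl J hJ s : ℕ) ≤ (monoCompl J hJ u : ℕ) := by
    have : s ≤ u := by rw [Fin.le_def]; exact hgs
    exact (monoCompl_strictMono J hJ).monotone this
  have hval : (monoCompl J hJ u : ℕ) = (s : ℕ) := by
    have h1 : monoCompl J hJ u = ((e u : {x // x ∈ (Finset.univ.image J)ᶜ}) : Fin n) := rfl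
    rw [h1, hu, e.apply_symm_apply]
  omega

theorem strictMono_bound {n k : ℕ} {J : Fin (k + 1) → Fin n} (hJ : StrictMono J) :
    (J 0 : ℕ) + (k + 1) ≤ n := by
  have hmono : StrictMono (fun t : Fin (k + 1) => (J t : ℕ) - (J 0 : ℕ)) := by
    intro a b hab
    have h1 : J a < J b := hJ hab
    have h2 : J 0 ≤ J a := hJ.monotone (Fin.zero_le a)
    have h1' : (J a : ℕ) < (J b : ℕ) := h1
    have h2' : (J 0 : ℕ) ≤ (J a : ℕ) := h2
    show (J a : ℕ) - (J 0 : ℕ) < (J b : ℕ) - (J 0 : ℕ)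
    omega
  have h4 := fin_strictMono_le hmono (Fin.last k)
  have h3 : (J (Fin.last k) : ℕ) < n := (J (Fin.last k)).isLt
  simp only [Fin.val_last] at h4
  omega

theorem monoCompl_succ_eq {n k : ℕ} (hk : k + 1 ≤ n) (J : Fin (k + 1) → Fin n)
    (hJ : StrictMono J) (t : Fin (n - k)) :
    monoCompl (J ∘ Fin.succ) ((hJ.comp Fin.strictMono_succ).injective) t =
      if h : (t : ℕ) < (J 0 : ℕ) then
        monoCompl J hJ.injective ⟨(t : ℕ), by have := strictMono_bound hJ; omega⟩
      else if h' : (t : ℕ) = (J 0 : ℕ) then J 0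
      else monoCompl J hJ.injective ⟨(t : ℕ) - 1, by
        have := strictMono_bound hJ; have := t.isLt; omega⟩ := by
  have hb := strictMono_bound hJ
  have hJ' : StrictMono (J ∘ Fin.succ) := hJ.comp Fin.strictMono_succ
  have hcard : ((Finset.univ.image (J ∘ Fin.succ))ᶜ : Finset (Fin n)).card = n - k := by
    rw [Finset.card_compl, Finset.card_image_of_injective _ hJ'.injective, Finset.card_univ,
      Fintype.card_fin, Fintype.card_fin]
  set f : Fin (n - k) → Fin n := fun t =>
      if h : (t : ℕ) < (J 0 : ℕ) then
        monoCompl J hJ.injective ⟨(t : ℕ), by have := strictMono_bound hJ; omega⟩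
      else if h' : (t : ℕ) = (J 0 : ℕ) then J 0
      else monoCompl J hJ.injective ⟨(t : ℕ) - 1, by
        have := strictMono_bound hJ; have := t.isLt; omega⟩ with hf
  have hsmall : ∀ (m : ℕ) (hm : m < n - (k + 1)), m < (J 0 : ℕ) →
      (monoCompl J hJ.injective ⟨m, hm⟩ : ℕ) = m := by
    intro m hm hmJ
    have := monoCompl_eq_self J hJ.injective ⟨m, hm⟩ (by
      intro m' hm' u hmu
      have : (J 0 : ℕ) ≤ (J u : ℕ) := hJ.monotone (Fin.zero_le u)
      simp only at hm'
      omega)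
    simpa using this
  have hJsub : ∀ x : Fin n, x ∈ (Finset.univ.image J)ᶜ →
      x ∈ (Finset.univ.image (J ∘ Fin.succ))ᶜ := by
    intro x hx
    rw [Finset.mem_compl, Finset.mem_image] at hx ⊢
    rintro ⟨u, -, hu⟩
    exact hx ⟨u.succ, Finset.mem_univ _, hu⟩
  have hmem : ∀ x, f x ∈ (Finset.univ.image (J ∘ Fin.succ))ᶜ := by
    intro x
    rw [hf]
    dsimp only
    split_ifs with h h'
    · exact hJsub _ (Finset.orderEmbOfFin_mem _ _ _)
    · rw [Finset.mem_compl, Finset.mem_image]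
      rintro ⟨u, -, hu⟩
      have hlt : J 0 < (J ∘ Fin.succ) u := hJ (Fin.succ_pos u)
      rw [hu] at hlt
      exact lt_irrefl _ hlt
    · exact hJsub _ (Finset.orderEmbOfFin_mem _ _ _)
  have hmono : StrictMono f := by
    intro x y hxy
    have hxy' : (x : ℕ) < (y : ℕ) := hxy
    have hx1 := x.isLt
    have hy1 := y.isLt
    rw [hf]
    dsimp only
    rcases lt_trichotomy ((x : ℕ)) ((J 0 : ℕ)) with hx | hx | hx <;>
      rcases lt_trichotomy ((y : ℕ)) ((J 0 : ℕ)) with hy | hy | hy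
    · rw [dif_pos hx, dif_pos hy]
      exact monoCompl_strictMono J hJ.injective (Fin.mk_lt_mk.mpr hxy')
    · rw [dif_pos hx, dif_neg (by omega), dif_pos hy]
      rw [Fin.lt_def]
      exact lt_of_eq_of_lt (hsmall _ (by omega) hx) hx
    · rw [dif_pos hx, dif_neg (by omega), dif_neg (by omega)]
      exact monoCompl_strictMono J hJ.injective (Fin.mk_lt_mk.mpr (by omega))
    · omega
    · omega
    · -- x = J 0 < y
      rw [dif_neg (by omega), dif_pos hx, dif_neg (by omega), dif_neg (by omega)]
      rw [Fin.lt_def]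
      refine lt_of_le_of_ne ?_ ?_
      · refine le_trans (show (J 0 : ℕ) ≤ (y : ℕ) - 1 by omega) ?_
        exact le_monoCompl J hJ.injective ⟨(y : ℕ) - 1, by omega⟩
      · intro hcontra
        exact monoCompl_ne' J hJ.injective ⟨(y : ℕ) - 1, by omega⟩ 0 (Fin.ext hcontra.symm)
    · omega
    · omega
    · rw [dif_neg (by omega), dif_neg (by omega), dif_neg (by omega), dif_neg (by omega)]
      exact monoCompl_strictMono J hJ.injective (Fin.mk_lt_mk.mpr (by omega))
  have huniq := Finset.orderEmbOfFin_unique hcard hmem hmono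
  calc monoCompl (J ∘ Fin.succ) hJ'.injective t
      = ((Finset.univ.image (J ∘ Fin.succ))ᶜ).orderEmbOfFin hcard t := rfl
    _ = f t := (congrFun huniq t).symm

theorem key_perm_eq {m k : ℕ} (hk : k + 1 ≤ m + 1) (hk' : k ≤ m + 1)
    (J : Fin (k + 1) → Fin (m + 1)) (hJ : StrictMono J) :
    listPerm (Nat.sub_add_cancel hk')
        (monoCompl (J ∘ Fin.succ) (hJ.comp Fin.strictMono_succ).injective) (J ∘ Fin.succ)
        (monoCompl_injective _ _) ((hJ.comp Fin.strictMono_succ).injective)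
        (monoCompl_ne _ _) =
      listPerm (Nat.sub_add_cancel hk) (monoCompl J hJ.injective) J
        (monoCompl_injective _ _) hJ.injective (monoCompl_ne _ _) *
        (Fin.revPerm * Fin.cycleRange ((J 0).rev) * Fin.revPerm) := by
  have hb := strictMono_bound hJ
  apply Equiv.ext
  intro i
  have him := i.isLt
  simp only [Equiv.Perm.mul_apply, Fin.revPerm_apply]
  rcases lt_trichotomy ((i : ℕ)) ((J 0 : ℕ)) with hip | hip | hip
  · -- i < J 0 : fixed point of the cycle
    have h1 : Fin.rev (J 0) < Fin.rev i := Fin.rev_lt_rev.mpr hip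
    rw [Fin.cycleRange_of_gt h1, Fin.rev_rev]
    rw [listPerm_apply_lt _ _ _ _ _ _ i (show (i : ℕ) < m + 1 - k by omega),
      listPerm_apply_lt _ _ _ _ _ _ i (show (i : ℕ) < m + 1 - (k + 1) by omega),
      monoCompl_succ_eq hk J hJ, dif_pos (show ((⟨(i : ℕ), _⟩ : Fin (m + 1 - k)) : ℕ) < (J 0 : ℕ) from hip)]
  · -- i = J 0
    have hi : i = J 0 := Fin.ext hip
    subst hi
    rw [Fin.cycleRange_of_eq rfl]
    rw [listPerm_apply_lt _ _ _ _ _ _ _ (show ((J 0 : Fin (m+1)) : ℕ) < m + 1 - k by omega),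
      monoCompl_succ_eq hk J hJ, dif_neg (by simp), dif_pos (by simp)]
    rw [listPerm_apply_ge _ _ _ _ _ _ _ (show m + 1 - (k + 1) ≤ ((Fin.rev 0 : Fin (m+1)) : ℕ) by
      simp only [Fin.val_rev, Fin.val_zero]; omega)]
    congr 1
    ext
    simp [Fin.val_rev]
    omega
  · -- J 0 < i
    have h1 : Fin.rev i < Fin.rev (J 0) := Fin.rev_lt_rev.mpr hip
    rw [Fin.cycleRange_of_lt h1]
    have h2 : Fin.rev i < Fin.last m := lt_of_lt_of_le h1 (Fin.le_last _)
    have hv : ((Fin.rev (Fin.rev i + 1)) : ℕ) = (i : ℕ) - 1 := by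
      rw [Fin.val_rev, Fin.val_add_one_of_lt h2, Fin.val_rev]
      omega
    by_cases hcase : (i : ℕ) < m + 1 - k
    · -- middle zone: both sides read the complement
      rw [listPerm_apply_lt _ _ _ _ _ _ i hcase,
        listPerm_apply_lt _ _ _ _ _ _ _ (show ((Fin.rev (Fin.rev i + 1)) : ℕ) < m + 1 - (k + 1) by omega),
        monoCompl_succ_eq hk J hJ, dif_neg (by simp; omega), dif_neg (by simp; omega)]
      exact congrArg _ (Fin.ext hv.symm)
    · -- J zone
      rw [listPerm_apply_ge _ _ _ _ _ _ i (by omega),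
        listPerm_apply_ge _ _ _ _ _ _ _ (show m + 1 - (k + 1) ≤ ((Fin.rev (Fin.rev i + 1)) : ℕ) by omega)]
      show J (Fin.succ _) = _
      refine congrArg J (Fin.ext ?_)
      have hq := (Fin.rev i + 1).isLt
      simp only [Fin.val_succ, Fin.val_rev] at hv ⊢
      omega

theorem sign_aux : ∀ (k n : ℕ) (hk : k ≤ n) (J : Fin k → Fin n) (hJ : StrictMono J),
    Equiv.Perm.sign
      (listPerm (Nat.sub_add_cancel hk) (monoCompl J hJ.injective) J
        (monoCompl_injective J hJ.injective) hJ.injective (monoCompl_ne J hJ.injective)) =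
    (-1) ^ (n * k + ∑ t, ((J t : ℕ) + 1)) := by
  intro k
  induction k with
  | zero =>
    intro n hk J hJ
    have h1 : listPerm (Nat.sub_add_cancel hk) (monoCompl J hJ.injective) J
        (monoCompl_injective J hJ.injective) hJ.injective (monoCompl_ne J hJ.injective) =
        Equiv.refl (Fin n) := by
      apply Equiv.ext
      intro i
      have hi := i.isLt
      rw [listPerm_apply_lt _ _ _ _ _ _ i (show (i : ℕ) < n - 0 by omega)]
      have := monoCompl_eq_self J hJ.injective ⟨(i : ℕ), by omega⟩ (fun m hm t => t.elim0)
      exact Fin.ext (by simpa using this)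
    rw [h1, show n * 0 + ∑ t : Fin 0, ((J t : ℕ) + 1) = 0 by simp]
    simp
  | succ k ih =>
    intro n hk J hJ
    rcases n with _ | m
    · omega
    have hb := strictMono_bound hJ
    have hk' : k ≤ m + 1 := by omega
    have hkey := key_perm_eq hk hk' J hJ
    have hIH := ih (m + 1) hk' (J ∘ Fin.succ) (hJ.comp Fin.strictMono_succ)
    rw [hkey, map_mul, map_mul, map_mul] at hIH
    have hsq : Equiv.Perm.sign (Fin.revPerm : Equiv.Perm (Fin (m+1))) *
        Equiv.Perm.sign (Fin.revPerm : Equiv.Perm (Fin (m+1))) = 1 := Int.units_mul_self _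
    have hmid : Equiv.Perm.sign (Fin.revPerm : Equiv.Perm (Fin (m+1))) *
        Equiv.Perm.sign (Fin.cycleRange ((J 0).rev)) *
        Equiv.Perm.sign (Fin.revPerm : Equiv.Perm (Fin (m+1))) =
        Equiv.Perm.sign (Fin.cycleRange ((J 0).rev)) := by
      rw [mul_comm (Equiv.Perm.sign (Fin.revPerm : Equiv.Perm (Fin (m+1))))
        (Equiv.Perm.sign (Fin.cycleRange ((J 0).rev))), mul_assoc, hsq, mul_one]
    rw [hmid] at hIH
    have hs : Equiv.Perm.sign
        (listPerm (Nat.sub_add_cancel hk) (monoCompl J hJ.injective) J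
          (monoCompl_injective J hJ.injective) hJ.injective (monoCompl_ne J hJ.injective)) =
        (-1) ^ ((m + 1) * k + ∑ t, (((J ∘ Fin.succ) t : ℕ) + 1)) *
          Equiv.Perm.sign (Fin.cycleRange ((J 0).rev)) := by
      rw [← hIH, mul_assoc, Int.units_mul_self, mul_one]
    rw [hs, Fin.sign_cycleRange, ← pow_add]
    apply neg_one_pow_parity
    have hsum : ∑ t : Fin (k + 1), ((J t : ℕ) + 1) =
        ((J 0 : ℕ) + 1) + ∑ t : Fin k, ((J t.succ : ℕ) + 1) := Fin.sum_univ_succ _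
    have hrev : (((J 0).rev : Fin (m + 1)) : ℕ) = m + 1 - ((J 0 : ℕ) + 1) := Fin.val_rev _
    simp only [Function.comp_apply] at *
    rw [hsum, hrev, Nat.mul_succ]
    generalize (m + 1) * k = a
    generalize ∑ t : Fin k, ((J t.succ : ℕ) + 1) = b
    omega

theorem sign_monoCompl_rev_perm {n k : ℕ} (hk : k ≤ n) (J : Fin k → Fin n) (hJ : StrictMono J) :
    Equiv.Perm.sign
      (listPerm (Nat.sub_add_cancel hk) (monoCompl J hJ.injective) J
        (monoCompl_injective J hJ.injective) hJ.injective (monoCompl_ne J hJ.injective)) =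
    (-1) ^ (n * k + ∑ t, ((J t : ℕ) + 1)) :=
  sign_aux k n hk J hJ
end

section
/- Let 0 ≤ k ≤ n, let α : Fin k → Fin n be injective, and let γ : Fin k → Fin n be arbitrary. Then the sum, over all injective β : Fin (n-k) → Fin n whose range is the complement of the range of α, of sign⟨α,⃖β⟩ · w(β,γ) equals (-1)^⌊n/2⌋ · (n-k)! · v(α,γ). Here w(β,γ) := sign⟨β,⃖γ⟩ if γ is injective with range equal to the complement of the range of β, and 0 otherwise; and v(α,γ) := sign τ if γ = α ∘ τ for the (necessarily unique) permutation τ of Fin k, and 0 if γ is not a rearrangement of α. -/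
attribute [local instance] Classical.propDecidable

/-- `w(β,γ)`: the sign of the permutation `⟨β,⃖γ⟩` if `γ` is injective with range equal to
the complement of the range of `β`, and `0` otherwise. -/
noncomputable def wCoef {n k : ℕ} (hk : k ≤ n) (β : Fin (n - k) → Fin n)
    (hβ : Function.Injective β) (γ : Fin k → Fin n) : ℤ :=
  if h : Function.Injective γ ∧ Set.range γ = (Set.range β)ᶜ then
    (Equiv.Perm.sign (listPerm (Nat.sub_add_cancel hk) β γ hβ h.1
      (fun s t hst => (h.2 ▸ Set.mem_range_self t : γ t ∈ (Set.range β)ᶜ) ⟨s, hst⟩)) : ℤ)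
  else 0

/-- `v(α,γ)`: the sign of the (necessarily unique) permutation `τ` with `γ = α ∘ τ`,
and `0` if `γ` is not a rearrangement of `α`. -/
noncomputable def vCoef {n k : ℕ} (α γ : Fin k → Fin n) : ℤ :=
  if h : ∃ τ : Equiv.Perm (Fin k), γ = α ∘ τ then (Equiv.Perm.sign h.choose : ℤ) else 0

theorem listPerm_apply_castAdd {n a b : ℕ} (hab : a + b = n) (α : Fin a → Fin n)
    (β : Fin b → Fin n) (hα : Function.Injective α) (hβ : Function.Injective β)
    (hd : ∀ s t, α s ≠ β t) (s : Fin a) :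
    listPerm hab α β hα hβ hd (Fin.cast hab (Fin.castAdd b s)) = α s := by
  simp [listPerm, Fin.cast_cast]

theorem listPerm_apply_natAdd {n a b : ℕ} (hab : a + b = n) (α : Fin a → Fin n)
    (β : Fin b → Fin n) (hα : Function.Injective α) (hβ : Function.Injective β)
    (hd : ∀ s t, α s ≠ β t) (t : Fin b) :
    listPerm hab α β hα hβ hd (Fin.cast hab (Fin.natAdd a t)) = β (Fin.rev t) := by
  simp [listPerm, Fin.cast_cast]

theorem sign_revPerm : ∀ n : ℕ, Equiv.Perm.sign (Fin.revPerm : Equiv.Perm (Fin n)) = (-1) ^ (n / 2)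
  | 0 => by
    rw [Subsingleton.elim (Fin.revPerm : Equiv.Perm (Fin 0)) 1]
    simp
  | (n + 1) => by
    have hE : (Fin.revPerm : Equiv.Perm (Fin (n + 1))) = finRotate (n + 1) *
        (((finSuccEquiv' (Fin.last n)).symm).permCongr (Equiv.optionCongr Fin.revPerm)) := by
      ext x
      induction x using Fin.lastCases with
      | last =>
        simp [Equiv.permCongr_apply, finSuccEquiv'_at, finSuccEquiv'_symm_none, Fin.rev_last]
      | cast m =>
        have h1 : (finSuccEquiv' (Fin.last n)) (Fin.castSucc m) = some m :=
          finSuccEquiv'_below (Fin.castSucc_lt_last m)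
        simp only [Equiv.Perm.mul_apply, Equiv.permCongr_apply, Equiv.symm_symm, h1,
          Equiv.optionCongr_apply, Option.map_some, finSuccEquiv'_symm_some,
          Fin.succAbove_last, finRotate_succ_apply, Fin.revPerm_apply]
        have hlt : Fin.castSucc (Fin.rev m) < Fin.last n := Fin.castSucc_lt_last _
        rw [Fin.val_add_one_of_lt hlt]
        have := m.isLt
        simp [Fin.val_rev]
        omega
    rw [hE, map_mul, sign_finRotate, Equiv.Perm.sign_permCongr, Equiv.optionCongr_sign,
      sign_revPerm n]
    rcases Nat.even_or_odd n with ⟨m, rfl⟩ | ⟨m, rfl⟩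
    · have h1 : m + m = 2 * m := by omega
      have h2 : (m + m) / 2 = m := by omega
      have h3 : (m + m + 1) / 2 = m := by omega
      rw [h2, h3, h1, Nat.add_sub_cancel, pow_mul]
      norm_num
    · have h2 : (2 * m + 1) / 2 = m := by omega
      have h3 : (2 * m + 1 + 1) / 2 = m + 1 := by omega
      rw [h2, h3, pow_succ, Nat.add_sub_cancel, pow_add, pow_mul]
      norm_num

theorem key_sign {n k : ℕ} (hk : k ≤ n) {α γ : Fin k → Fin n} {β : Fin (n - k) → Fin n}
    (hα : Function.Injective α) (hβ : Function.Injective β) (hγ : Function.Injective γ)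
    (hd1 : ∀ s t, α s ≠ β t) (hd2 : ∀ s t, β s ≠ γ t)
    (τ : Equiv.Perm (Fin k)) (hγτ : γ = α ∘ τ) :
    Equiv.Perm.sign (listPerm (Nat.add_sub_cancel' hk) α β hα hβ hd1) *
      Equiv.Perm.sign (listPerm (Nat.sub_add_cancel hk) β γ hβ hγ hd2) =
    (-1) ^ (n / 2) * Equiv.Perm.sign τ := by
  set h1 := Nat.add_sub_cancel' hk with hh1
  set h2 := Nat.sub_add_cancel hk with hh2
  set P := listPerm h1 α β hα hβ hd1 with hP
  set Q := listPerm h2 β γ hβ hγ hd2 with hQdef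
  set e : Fin (n - k) ⊕ Fin k ≃ Fin n := finSumFinEquiv.trans (finCongr h2) with he
  set τ' : Equiv.Perm (Fin k) := (Fin.revPerm.trans τ).trans Fin.revPerm with hτ'
  set T : Equiv.Perm (Fin n) := e.permCongr (Equiv.sumCongr 1 τ') with hT
  have hQ : Q = P * (Fin.revPerm * T) := by
    ext x
    obtain ⟨y, rfl⟩ := e.surjective x
    have hTe : ∀ y, T (e y) = e ((Equiv.sumCongr 1 τ') y) := by
      intro y; simp [hT, Equiv.permCongr_apply]
    rcases y with s | t
    · have hL : e (Sum.inl s) = Fin.cast h2 (Fin.castAdd k s) := rfl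
      have hrev : Fin.revPerm (e (Sum.inl s)) = Fin.cast h1 (Fin.natAdd k (Fin.rev s)) := by
        apply Fin.ext
        have := s.isLt
        simp [hL, Fin.val_rev]
        omega
      have hTs : T (e (Sum.inl s)) = e (Sum.inl s) := by rw [hTe]; rfl
      have hLft : Q (e (Sum.inl s)) = β s := by
        rw [hL]; exact listPerm_apply_castAdd h2 β γ hβ hγ hd2 s
      have hR : ((P * (Fin.revPerm * T)) : Equiv.Perm (Fin n)) (e (Sum.inl s)) = β s := by
        rw [Equiv.Perm.mul_apply, Equiv.Perm.mul_apply, hTs, hrev, listPerm_apply_natAdd,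
          Fin.rev_rev]
      rw [hLft, hR]
    · have hL : e (Sum.inr t) = Fin.cast h2 (Fin.natAdd (n - k) t) := rfl
      have hL2 : e (Sum.inr (τ' t)) = Fin.cast h2 (Fin.natAdd (n - k) (τ' t)) := rfl
      have hrev : Fin.revPerm (e (Sum.inr (τ' t))) =
          Fin.cast h1 (Fin.castAdd (n - k) (τ (Fin.rev t))) := by
        apply Fin.ext
        have h3 := (τ (Fin.rev t)).isLt
        have hval : (τ' t : ℕ) = k - 1 - (τ (Fin.rev t) : ℕ) := by
          simp [hτ', Fin.val_rev]
          omega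
        simp [hL2, Fin.val_rev, hval]
        omega
      have hTt : T (e (Sum.inr t)) = e (Sum.inr (τ' t)) := by rw [hTe]; rfl
      have hLft : Q (e (Sum.inr t)) = α (τ (Fin.rev t)) := by
        rw [hL, listPerm_apply_natAdd, hγτ]; rfl
      have hR : ((P * (Fin.revPerm * T)) : Equiv.Perm (Fin n)) (e (Sum.inr t)) = α (τ (Fin.rev t)) := by
        rw [Equiv.Perm.mul_apply, Equiv.Perm.mul_apply, hTt, hrev, listPerm_apply_castAdd]
      rw [hLft, hR]
  have hsT : Equiv.Perm.sign T = Equiv.Perm.sign τ := by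
    rw [hT, Equiv.Perm.sign_permCongr, Equiv.Perm.sign_sumCongr, map_one, one_mul, hτ']
    rw [show (Fin.revPerm.trans τ).trans Fin.revPerm = Fin.revPerm * τ * Fin.revPerm from rfl]
    rw [map_mul, map_mul, mul_right_comm, Int.units_mul_self, one_mul]
  calc Equiv.Perm.sign P * Equiv.Perm.sign Q
      = Equiv.Perm.sign P * (Equiv.Perm.sign P *
        (Equiv.Perm.sign (Fin.revPerm : Equiv.Perm (Fin n)) * Equiv.Perm.sign T)) := by
        rw [hQ, map_mul, map_mul]
    _ = (Equiv.Perm.sign P * Equiv.Perm.sign P) *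
        (Equiv.Perm.sign (Fin.revPerm : Equiv.Perm (Fin n)) * Equiv.Perm.sign T) := by
        rw [mul_assoc]
    _ = (-1) ^ (n / 2) * Equiv.Perm.sign τ := by
        rw [Int.units_mul_self, one_mul, sign_revPerm, hsT]

theorem exists_perm_comp {a n : ℕ} {f g : Fin a → Fin n} (hg : Function.Injective g)
    (h : Set.range g ⊆ Set.range f) : ∃ σ : Equiv.Perm (Fin a), g = f ∘ σ := by
  choose c hc using fun t => h (Set.mem_range_self t)
  have hcinj : Function.Injective c := fun t1 t2 h12 => hg (by rw [← hc, ← hc, h12])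
  exact ⟨Equiv.ofBijective c (Finite.injective_iff_bijective.mp hcinj),
    funext fun t => (hc t).symm⟩

theorem range_monoCompl {n k : ℕ} (α : Fin k → Fin n) (hα : Function.Injective α) :
    Set.range (monoCompl α hα) = (Set.range α)ᶜ := by
  show Set.range ⇑((Finset.univ.image α)ᶜ.orderEmbOfFin _) = _
  rw [Finset.range_orderEmbOfFin]
  simp [Set.image_univ]

theorem card_valid {n k : ℕ} (α : Fin k → Fin n) (hα : Function.Injective α) :
    (Finset.univ.filter (fun β : Fin (n - k) → Fin n =>
      Function.Injective β ∧ Set.range β = (Set.range α)ᶜ)).card = (n - k).factorial := by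
  set β₀ := monoCompl α hα with hβ₀
  have hβ₀inj := monoCompl_injective α hα
  have hβ₀r := range_monoCompl α hα
  rw [show (n - k).factorial = Fintype.card (Equiv.Perm (Fin (n - k))) by
    rw [Fintype.card_perm, Fintype.card_fin], ← Finset.card_univ]
  apply (Finset.card_bij (fun (σ : Equiv.Perm (Fin (n - k))) _ => β₀ ∘ σ) ?_ ?_ ?_).symm
  · intro σ _
    rw [Finset.mem_filter]
    refine ⟨Finset.mem_univ _, hβ₀inj.comp σ.injective, ?_⟩
    rw [σ.surjective.range_comp, hβ₀r]
  · intro σ1 _ σ2 _ h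
    exact Equiv.ext fun t => hβ₀inj (congrFun h t)
  · intro β hβmem
    rw [Finset.mem_filter] at hβmem
    obtain ⟨σ, hσ⟩ := exists_perm_comp (f := β₀) hβmem.2.1 (by rw [hβmem.2.2, ← hβ₀r])
    exact ⟨σ, Finset.mem_univ _, hσ.symm⟩

theorem sum_sign_listPerm_mul_wCoef {n k : ℕ} (hk : k ≤ n)
    (α : Fin k → Fin n) (hα : Function.Injective α) (γ : Fin k → Fin n) :
    (∑ β : Fin (n - k) → Fin n,
      if h : Function.Injective β ∧ Set.range β = (Set.range α)ᶜ then
        (Equiv.Perm.sign (listPerm (Nat.add_sub_cancel' hk) α β hα h.1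
          (fun s t hst => (h.2 ▸ Set.mem_range_self t : β t ∈ (Set.range α)ᶜ) ⟨s, hst⟩)) : ℤ)
          * wCoef hk β h.1 γ
      else 0) =
    (-1) ^ (n / 2) * (Nat.factorial (n - k) : ℤ) * vCoef α γ := by
  by_cases hcase : Function.Injective γ ∧ Set.range γ = Set.range α
  · obtain ⟨hγinj, hγr⟩ := hcase
    obtain ⟨τ, hγτ⟩ := exists_perm_comp (f := α) hγinj (by rw [hγr])
    have hex : ∃ τ : Equiv.Perm (Fin k), γ = α ∘ τ := ⟨τ, hγτ⟩
    have hchoose : hex.choose = τ := by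
      apply Equiv.ext; intro t
      exact hα ((congrFun hex.choose_spec t).symm.trans (congrFun hγτ t))
    set c : ℤ := (-1) ^ (n / 2) * (Equiv.Perm.sign τ : ℤ) with hc
    calc (∑ β : Fin (n - k) → Fin n,
      if h : Function.Injective β ∧ Set.range β = (Set.range α)ᶜ then
        (Equiv.Perm.sign (listPerm (Nat.add_sub_cancel' hk) α β hα h.1
          (fun s t hst => (h.2 ▸ Set.mem_range_self t : β t ∈ (Set.range α)ᶜ) ⟨s, hst⟩)) : ℤ)
          * wCoef hk β h.1 γ
      else 0)
        = ∑ β : Fin (n - k) → Fin n,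
            (if Function.Injective β ∧ Set.range β = (Set.range α)ᶜ then c else 0) := by
          apply Finset.sum_congr rfl
          intro β _
          by_cases hb : Function.Injective β ∧ Set.range β = (Set.range α)ᶜ
          · rw [dif_pos hb, if_pos hb]
            have hwcond : Function.Injective γ ∧ Set.range γ = (Set.range β)ᶜ :=
              ⟨hγinj, by rw [hb.2, compl_compl, hγr]⟩
            unfold wCoef
            rw [dif_pos hwcond]
            have hkey := key_sign hk hα hb.1 hγinj
              (fun s t hst => (hb.2 ▸ Set.mem_range_self t : β t ∈ (Set.range α)ᶜ) ⟨s, hst⟩)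
              (fun s t hst =>
                (hwcond.2 ▸ Set.mem_range_self t : γ t ∈ (Set.range β)ᶜ) ⟨s, hst⟩)
              τ hγτ
            rw [hc]
            have h2 := congrArg Units.val hkey
            push_cast at h2
            exact h2
          · rw [dif_neg hb, if_neg hb]
      _ = ((n - k).factorial : ℤ) * c := by
          rw [← Finset.sum_filter, Finset.sum_const, card_valid α hα, nsmul_eq_mul]
      _ = (-1) ^ (n / 2) * (Nat.factorial (n - k) : ℤ) * vCoef α γ := by
          unfold vCoef
          rw [dif_pos hex, hchoose, hc]
          ring
  · have hv : vCoef α γ = 0 := by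
      unfold vCoef
      refine dif_neg ?_
      rintro ⟨τ, rfl⟩
      exact hcase ⟨hα.comp τ.injective, τ.surjective.range_comp α⟩
    rw [hv, mul_zero]
    apply Finset.sum_eq_zero
    intro β _
    by_cases hb : Function.Injective β ∧ Set.range β = (Set.range α)ᶜ
    · rw [dif_pos hb]
      have hw : wCoef hk β hb.1 γ = 0 := by
        unfold wCoef
        refine dif_neg ?_
        rintro ⟨hg1, hg2⟩
        exact hcase ⟨hg1, by rw [hg2, hb.2, compl_compl]⟩
      rw [hw, mul_zero]
    · rw [dif_neg hb]
end

section
/- Desnanot–Jacobi identity (Dodgson condensation): let F be a field and A an invertible (n+2)×(n+2) matrix over F. Then det A · det (int A) = det (A with row 0 and column 0 deleted) · det (A with the last row and the last column deleted) - det (A with row 0 and the last column deleted) · det (A with the last row and column 0 deleted), where int A is the n×n interior submatrix of A obtained by deleting the first and last rows and the first and last columns. -/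
open Matrix

lemma det_one_updateColumn {m : Type*} [DecidableEq m] [Fintype m] {R : Type*} [CommRing R]
    (j : m) (b : m → R) : ((1 : Matrix m m R).updateCol j b).det = b j := by
  rw [← Matrix.cramer_apply, Matrix.cramer_one]
  rfl

lemma det_corner {F : Type*} [Field F] {n : ℕ} (u v : Fin (n + 2) → F) :
    (((1 : Matrix (Fin (n+2)) (Fin (n+2)) F).updateCol 0 u).updateCol
        (Fin.last (n+1)) v).det
      = u 0 * v (Fin.last (n+1)) - u (Fin.last (n+1)) * v 0 := by
  set C := ((1 : Matrix (Fin (n+2)) (Fin (n+2)) F).updateCol 0 u).updateCol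
      (Fin.last (n+1)) v with hC
  have h0l : (0 : Fin (n+2)) ≠ Fin.last (n+1) := by
    simp [Fin.ext_iff]
  have hC0 : ∀ i, C i 0 = u i := by
    intro i
    simp [hC, Matrix.updateCol_apply, h0l.symm]
  rw [det_succ_column_zero]
  rw [← Finset.sum_subset (Finset.subset_univ ({0, Fin.last (n+1)} : Finset (Fin (n+2))))]
  · rw [Finset.sum_pair h0l]
    have hsub0 : C.submatrix (Fin.succAbove 0) Fin.succ
        = (1 : Matrix (Fin (n+1)) (Fin (n+1)) F).updateCol (Fin.last n)
            (fun r => v r.succ) := by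
      ext r j
      simp only [Matrix.submatrix_apply, Fin.succAbove_zero, hC,
        Matrix.updateCol_apply, Fin.succ_eq_last_succ, Fin.succ_ne_zero,
        if_false, Matrix.one_apply, Fin.succ_inj]
    have hsubl : C.submatrix (Fin.succAbove (Fin.last (n+1))) Fin.succ
        = ((1 : Matrix (Fin (n+1)) (Fin (n+1)) F).updateCol 0
            (fun r => v r.castSucc)).submatrix id (finRotate (n+1)) := by
      ext r j
      by_cases hj : j = Fin.last n
      · subst hj
        simp [hC, Matrix.updateCol_apply, Fin.succ_last, finRotate_last]
      · have h1 : (finRotate (n+1) j : ℕ) = (j : ℕ) + 1 :=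
          coe_finRotate_of_ne_last hj
        have h2 : finRotate (n+1) j ≠ 0 := by
          intro h; rw [h] at h1; simp at h1
        have h3 : j.succ ≠ Fin.last (n+1) := by
          simpa [Fin.succ_eq_last_succ] using hj
        simp only [Matrix.submatrix_apply, Fin.succAbove_last, hC,
          Matrix.updateCol_apply, h3, if_false, Fin.succ_ne_zero,
          Matrix.one_apply, id_eq, h2]
        congr 1
        simp [Fin.ext_iff, h1, Fin.val_add_one, hj]
    rw [hsub0, hsubl, det_permute', sign_finRotate, det_one_updateColumn,
      det_one_updateColumn, hC0, hC0]
    simp only [Fin.val_zero, pow_zero, one_mul, Fin.succ_last, Fin.val_last,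
      Fin.castSucc_zero, Nat.add_sub_cancel]
    have : ((((-1 : ℤˣ) ^ n : ℤˣ) : ℤ) : F) = (-1 : F) ^ n := by push_cast; ring
    rw [this]
    have hsgn : (-1 : F) ^ (n + 1) * (-1 : F) ^ n = -1 := by
      rw [← pow_add]
      have : n + 1 + n = 2 * n + 1 := by ring
      rw [this, pow_succ, pow_mul]
      simp
    linear_combination u (Fin.last (n + 1)) * v 0 * hsgn
  · intro i _ hi
    simp only [Finset.mem_insert, Finset.mem_singleton, not_or] at hi
    obtain ⟨hi0, hil⟩ := hi
    have : (C.submatrix (Fin.succAbove i) Fin.succ).det = 0 := by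
      apply Matrix.det_eq_zero_of_column_eq_zero (i.pred hi0)
      intro r
      simp only [Matrix.submatrix_apply, Fin.succ_pred]
      simp [hC, Matrix.updateCol_apply, Matrix.one_apply, hil, hi0,
        Fin.succAbove_ne i r]
    rw [this, mul_zero]

theorem desnanot_jacobi {F : Type*} [Field F] {n : ℕ}
    (A : Matrix (Fin (n + 2)) (Fin (n + 2)) F) (hA : IsUnit A.det) :
    A.det * (A.submatrix (fun t : Fin n => (t.succ.castSucc : Fin (n + 2)))
        (fun t : Fin n => (t.succ.castSucc : Fin (n + 2)))).det =
      (A.submatrix (Fin.succAbove 0) (Fin.succAbove 0)).det *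
        (A.submatrix (Fin.succAbove (Fin.last (n + 1))) (Fin.succAbove (Fin.last (n + 1)))).det -
      (A.submatrix (Fin.succAbove 0) (Fin.succAbove (Fin.last (n + 1)))).det *
        (A.submatrix (Fin.succAbove (Fin.last (n + 1))) (Fin.succAbove 0)).det := by
  have h0l : (0 : Fin (n+2)) ≠ Fin.last (n+1) := by simp [Fin.ext_iff]
  set l : Fin (n+2) := Fin.last (n+1) with hl
  set B := A.adjugate with hB
  set C := ((1 : Matrix (Fin (n+2)) (Fin (n+2)) F).updateCol 0 (fun i => B i 0)).updateCol
      l (fun i => B i l) with hCdef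
  set D := (A.updateCol 0 (fun i => if i = 0 then A.det else 0)).updateCol
      l (fun i => if i = l then A.det else 0) with hDdef
  have hAC : A * C = D := by
    ext i j
    rw [Matrix.mul_apply]
    by_cases hj0 : j = 0
    · subst hj0
      have hc : ∀ k, C k (0 : Fin (n+2)) = B k 0 := by
        intro k; simp [hCdef, Matrix.updateCol_apply, h0l.symm, hl]
      have h1 : ∑ k, A i k * C k 0 = (A * A.adjugate) i 0 := by
        rw [Matrix.mul_apply]; exact Finset.sum_congr rfl fun k _ => by rw [hc k, hB]
      rw [h1, Matrix.mul_adjugate]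
      simp [hDdef, Matrix.updateCol_apply, h0l.symm, Matrix.one_apply, hl,
        Matrix.smul_apply]
    · by_cases hjl : j = l
      · subst hjl
        have hc : ∀ k, C k l = B k l := by
          intro k; simp [hCdef, Matrix.updateCol_apply]
        have h1 : ∑ k, A i k * C k l = (A * A.adjugate) i l := by
          rw [Matrix.mul_apply]; exact Finset.sum_congr rfl fun k _ => by rw [hc k, hB]
        rw [h1, Matrix.mul_adjugate]
        simp [hDdef, Matrix.updateCol_apply, Matrix.one_apply, Matrix.smul_apply]
      · have hc : ∀ k, C k j = if k = j then 1 else 0 := by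
          intro k; simp [hCdef, Matrix.updateCol_apply, hj0, hjl, Matrix.one_apply]
        simp only [hc, mul_ite, mul_one, mul_zero]
        rw [Finset.sum_ite_eq' Finset.univ j (fun k => A i k)]
        simp [hDdef, Matrix.updateCol_apply, hj0, hjl]
  have hD0 : ∀ i, D i 0 = if i = 0 then A.det else 0 := by
    intro i; simp [hDdef, Matrix.updateCol_apply, h0l.symm, hl]
  have hcol : ((Fin.last n).succ : Fin (n+2)) = l := by rw [hl, Fin.succ_last]
  have hDdet : D.det = A.det * (A.det *
      (A.submatrix (fun t : Fin n => (t.succ.castSucc : Fin (n + 2)))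
        (fun t : Fin n => (t.succ.castSucc : Fin (n + 2)))).det) := by
    rw [det_succ_column_zero, Finset.sum_eq_single 0]
    · rw [hD0 0, if_pos rfl]
      simp only [Fin.val_zero, pow_zero, one_mul, Fin.succAbove_zero]
      set E := D.submatrix Fin.succ Fin.succ with hE
      have hEl : ∀ r, E r (Fin.last n) = if r = Fin.last n then A.det else 0 := by
        intro r
        have h2 : E r (Fin.last n) = D r.succ l := by
          rw [hE, Matrix.submatrix_apply, hcol]
        rw [h2, hDdef]
        simp only [Matrix.updateCol_apply, if_pos rfl]
        have h3 : r.succ = l ↔ r = Fin.last n := by rw [← hcol, Fin.succ_inj]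
        simp [h3]
      have hsub : E.submatrix (Fin.succAbove (Fin.last n)) (Fin.succAbove (Fin.last n))
          = A.submatrix (fun t : Fin n => (t.succ.castSucc : Fin (n + 2)))
              (fun t : Fin n => (t.succ.castSucc : Fin (n + 2))) := by
        ext r j
        have hj1 : (Fin.castSucc (Fin.succ j) : Fin (n + 2)) ≠ 0 := by
          simp [Fin.ext_iff]
        have hj2 : (Fin.castSucc (Fin.succ j) : Fin (n + 2)) ≠ l := by
          rw [hl, Ne, Fin.ext_iff, Fin.coe_castSucc, Fin.val_succ, Fin.val_last]
          omega
        simp only [Matrix.submatrix_apply, Fin.succAbove_last, hE, hDdef,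
          Matrix.updateCol_apply, hj1, hj2, if_false, Fin.succ_castSucc]
      rw [det_succ_column E (Fin.last n), Finset.sum_eq_single (Fin.last n)]
      · rw [hEl, if_pos rfl, hsub]
        have h4 : ((Fin.last n : Fin (n+1)) : ℕ) + ((Fin.last n : Fin (n+1)) : ℕ) = 2 * n := by
          simp [Fin.val_last]; ring
        rw [h4, pow_mul]
        simp only [neg_one_sq, one_pow, one_mul]
      · intro r _ hr
        rw [hEl, if_neg hr, mul_zero, zero_mul]
      · intro h; exact absurd (Finset.mem_univ _) h
    · intro i _ hi
      rw [hD0, if_neg hi, mul_zero, zero_mul]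
    · intro h; exact absurd (Finset.mem_univ _) h
  have hCdet : C.det = B 0 0 * B l l - B l 0 * B 0 l := by
    rw [hCdef, hl, det_corner]
  have key : A.det * (A.det *
      (A.submatrix (fun t : Fin n => (t.succ.castSucc : Fin (n + 2)))
        (fun t : Fin n => (t.succ.castSucc : Fin (n + 2)))).det)
      = A.det * (B 0 0 * B l l - B l 0 * B 0 l) := by
    rw [← hDdet, ← hAC, Matrix.det_mul, hCdet]
  have hAne : A.det ≠ 0 := hA.ne_zero
  have key2 := mul_left_cancel₀ hAne key
  rw [key2]
  have e00 : B 0 0 = (A.submatrix (Fin.succAbove 0) (Fin.succAbove 0)).det := by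
    rw [hB, Matrix.adjugate_fin_succ_eq_det_submatrix]
    simp
  have ell : B l l = (A.submatrix (Fin.succAbove l) (Fin.succAbove l)).det := by
    rw [hB, Matrix.adjugate_fin_succ_eq_det_submatrix, hl]
    simp only [Fin.val_last]
    rw [show (n + 1 + (n + 1)) = 2 * (n+1) by ring, pow_mul]
    simp
  have el0 : B l 0 = (-1 : F) ^ (n+1) *
      (A.submatrix (Fin.succAbove 0) (Fin.succAbove l)).det := by
    rw [hB, Matrix.adjugate_fin_succ_eq_det_submatrix, hl]
    simp
  have e0l : B 0 l = (-1 : F) ^ (n+1) *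
      (A.submatrix (Fin.succAbove l) (Fin.succAbove 0)).det := by
    rw [hB, Matrix.adjugate_fin_succ_eq_det_submatrix, hl]
    simp
  rw [e00, ell, el0, e0l]
  have hsq : (-1 : F) ^ (n+1) * (-1 : F) ^ (n+1) = 1 := by
    rw [← pow_add, show (n+1) + (n+1) = 2 * (n+1) by ring, pow_mul]
    simp
  linear_combination (-((A.submatrix (Fin.succAbove 0) (Fin.succAbove l)).det *
    (A.submatrix (Fin.succAbove l) (Fin.succAbove 0)).det)) * hsq
end
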